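/- Let N, k, j be positive integers with N > j(k+1), and let φ_{k,j} ∈ ℂ^N be the scale-j order-k finite-difference stencil. Then for every ξ ∈ {1, …, N−1} (so that e^{2πiξ/N} ≠ 1), the discrete Fourier transform of φ_{k,j} satisfies F(φ_{k,j})_ξ = (e^{2πiξ j/N} − 1)^{k+1} / (e^{2πiξ/N} − 1). -/

import Mathlib

open Finset

/-- The scale-`j` order-`k` multiscale finite-difference stencil, as a vector in `ℂ^N`
(0-indexed by naturals `m < N`). -/
noncomputable def phiC (N k j : ℕ) (m : ℕ) : ℂ :=
  if m = 0 then (-1 : ℂ) ^ k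
  else if m ≤ N - j * (k + 1) then 0
  else (-1 : ℂ) ^ (k + (N - m) / j) * (Nat.choose k ((N - m) / j) : ℂ)

lemma aux_group (z : ℂ) (j : ℕ) (hj : 0 < j) (c : ℕ → ℂ) (s : ℕ) :
    ∑ n ∈ Finset.range (j * s), c (n / j) * z ^ n =
      (∑ q ∈ Finset.range s, c q * z ^ (j * q)) * (∑ r ∈ Finset.range j, z ^ r) := by
  induction s with
  | zero => simp
  | succ s ih =>
    rw [Nat.mul_succ, Finset.sum_range_add, ih, Finset.sum_range_succ, add_mul]
    congr 1
    rw [Finset.mul_sum]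
    apply Finset.sum_congr rfl
    intro r hr
    rw [Finset.mem_range] at hr
    rw [Nat.mul_add_div hj, Nat.div_eq_of_lt hr, add_zero, pow_add]
    ring

lemma aux_binom (z : ℂ) (k j : ℕ) :
    ∑ q ∈ Finset.range (k + 1), (-1 : ℂ) ^ (k + q) * (Nat.choose k q : ℂ) * z ^ (j * q) =
      (z ^ j - 1) ^ k := by
  rw [sub_pow]
  apply Finset.sum_congr rfl
  intro q hq
  rw [one_pow, pow_mul, add_comm k q]
  ring

lemma exp_ne_one (N ξ : ℕ) (hN : 0 < N) (hξ1 : 1 ≤ ξ) (hξ : ξ < N) :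
    Complex.exp (2 * (Real.pi : ℂ) * Complex.I * (ξ : ℂ) / (N : ℂ)) ≠ 1 := by
  intro heq
  rw [Complex.exp_eq_one_iff] at heq
  obtain ⟨n, hn⟩ := heq
  have hNne : (N : ℂ) ≠ 0 := Nat.cast_ne_zero.2 hN.ne'
  have hpi : (Real.pi : ℂ) ≠ 0 := Complex.ofReal_ne_zero.2 Real.pi_ne_zero
  have hI : Complex.I ≠ 0 := Complex.I_ne_zero
  have h2pi : (2 * (Real.pi : ℂ) * Complex.I) ≠ 0 :=
    mul_ne_zero (mul_ne_zero two_ne_zero hpi) hI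
  have hxn : (ξ : ℂ) = (n : ℂ) * N := by
    field_simp at hn
    apply mul_left_cancel₀ h2pi
    linear_combination (2 * (Real.pi : ℂ) * Complex.I) * hn
  have hxn' : (ξ : ℤ) = n * N := by exact_mod_cast hxn
  have hN' : (0 : ℤ) < N := by exact_mod_cast hN
  have h1 : (1 : ℤ) ≤ ξ := by exact_mod_cast hξ1
  have h2 : (ξ : ℤ) < N := by exact_mod_cast hξ
  rcases lt_trichotomy n 0 with hn0 | hn0 | hn0
  · nlinarith
  · simp [hn0] at hxn'; omega
  · nlinarith

theorem dft_phi_formula (N k j : ℕ) (hN : 0 < N) (hk : 0 < k) (hj : 0 < j)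
    (h : j * (k + 1) < N) (ξ : ℕ) (hξ1 : 1 ≤ ξ) (hξ : ξ < N) :
    ∑ m ∈ Finset.range N,
        phiC N k j m *
          Complex.exp (-(2 * (Real.pi : ℂ) * Complex.I * (m : ℂ) * (ξ : ℂ) / (N : ℂ))) =
      (Complex.exp (2 * (Real.pi : ℂ) * Complex.I * (ξ : ℂ) * (j : ℂ) / (N : ℂ)) - 1) ^ (k + 1) /
        (Complex.exp (2 * (Real.pi : ℂ) * Complex.I * (ξ : ℂ) / (N : ℂ)) - 1) := by
  set z : ℂ := Complex.exp (2 * (Real.pi : ℂ) * Complex.I * (ξ : ℂ) / (N : ℂ)) with hz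
  have hNne : (N : ℂ) ≠ 0 := Nat.cast_ne_zero.2 hN.ne'
  have hz0 : z ≠ 0 := Complex.exp_ne_zero _
  have hz1 : z ≠ 1 := exp_ne_one N ξ hN hξ1 hξ
  have hzN : z ^ N = 1 := by
    rw [hz, ← Complex.exp_nat_mul]
    have : (N : ℂ) * (2 * (Real.pi : ℂ) * Complex.I * (ξ : ℂ) / (N : ℂ)) =
        (ξ : ℂ) * (2 * (Real.pi : ℂ) * Complex.I) := by field_simp
    rw [this, Complex.exp_nat_mul, Complex.exp_two_pi_mul_I, one_pow]
  -- exponential term as power of z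
  have hexp : ∀ m : ℕ, m ≤ N →
      Complex.exp (-(2 * (Real.pi : ℂ) * Complex.I * (m : ℂ) * (ξ : ℂ) / (N : ℂ))) =
        z ^ (N - m) := by
    intro m hm
    have h1 : -(2 * (Real.pi : ℂ) * Complex.I * (m : ℂ) * (ξ : ℂ) / (N : ℂ)) =
        (m : ℂ) * (-(2 * (Real.pi : ℂ) * Complex.I * (ξ : ℂ) / (N : ℂ))) := by ring
    rw [h1, Complex.exp_nat_mul, Complex.exp_neg, ← hz, inv_pow]
    symm
    apply eq_inv_of_mul_eq_one_left
    rw [← pow_add, Nat.sub_add_cancel hm, hzN]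
  -- rewrite LHS sum
  have hjk : j * (k + 1) ≤ N := h.le
  have key : ∑ m ∈ Finset.range N,
      phiC N k j m *
        Complex.exp (-(2 * (Real.pi : ℂ) * Complex.I * (m : ℂ) * (ξ : ℂ) / (N : ℂ))) =
      ∑ n ∈ Finset.range N,
        (if n < j * (k + 1) then (-1 : ℂ) ^ (k + n / j) * (Nat.choose k (n / j) : ℂ) else 0)
          * z ^ n := by
    rw [Finset.range_eq_Ico, Finset.sum_eq_sum_Ico_succ_bot hN,
      Finset.sum_eq_sum_Ico_succ_bot hN]
    congr 1
    · have h0 : (0:ℕ) < j * (k + 1) := by positivity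
      rw [hexp 0 hN.le]
      simp [phiC, h0, hzN]
    · apply Finset.sum_nbij' (i := fun m => N - m) (j := fun n => N - n)
      · intro a ha; rw [Finset.mem_Ico] at *; omega
      · intro a ha; rw [Finset.mem_Ico] at *; omega
      · intro a ha; rw [Finset.mem_Ico] at ha; omega
      · intro a ha; rw [Finset.mem_Ico] at ha; omega
      · intro m hm
        rw [Finset.mem_Ico] at hm
        rw [hexp m hm.2.le]
        congr 1
        simp only [phiC]
        split_ifs with h1 h2 h3 h3 <;> first | rfl | omega
  rw [key]
  have hzj : Complex.exp (2 * (Real.pi : ℂ) * Complex.I * (ξ : ℂ) * (j : ℂ) / (N : ℂ)) =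
      z ^ j := by
    rw [hz, ← Complex.exp_nat_mul]
    congr 1
    ring
  rw [hzj]
  have hsub : ∑ n ∈ Finset.range N,
      (if n < j * (k + 1) then (-1 : ℂ) ^ (k + n / j) * (Nat.choose k (n / j) : ℂ) else 0)
        * z ^ n =
      ∑ n ∈ Finset.range (j * (k + 1)),
        (-1 : ℂ) ^ (k + n / j) * (Nat.choose k (n / j) : ℂ) * z ^ n := by
    rw [← Finset.sum_subset (Finset.range_subset_range.2 hjk)]
    · apply Finset.sum_congr rfl
      intro n hn
      rw [Finset.mem_range] at hn
      rw [if_pos hn]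
    · intro n _ hn
      rw [Finset.mem_range] at hn
      rw [if_neg (by omega), zero_mul]
  rw [hsub, aux_group z j hj (fun q => (-1 : ℂ) ^ (k + q) * (Nat.choose k q : ℂ)) (k + 1),
    aux_binom]
  have hz1' : z - 1 ≠ 0 := sub_ne_zero.2 hz1
  rw [eq_div_iff hz1', pow_succ, mul_assoc, geom_sum_mul]
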